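/- For the KNN valuation function u with parameter k, the Shapley–Taylor interaction matrix has equal entries along each column above the superdiagonal: for a fixed j and any a, b with a < j and b < j, φ_{a,j}(u) = φ_{b,j}(u). -/

import Mathlib

open Finset

/-- KNN valuation function: fraction (out of k) of label matches among the
min(k,|S|) smallest-index (closest) elements of S. `m i` says whether train
point i's label matches the test label. -/
noncomputable def knnVal (k : ℕ) (m : ℕ → Bool) (S : Finset ℕ) : ℝ :=
  (((S.sort (· ≤ ·)).take k).countP m : ℝ) / k

/-- Discrete second difference of a set function. -/
noncomputable def secondDiff (u : Finset ℕ → ℝ) (S : Finset ℕ) (i j : ℕ) : ℝ :=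
  u (S ∪ {i, j}) - u (S ∪ {i}) - u (S ∪ {j}) + u S

/-- Shapley–Taylor pair-interaction index on N = {1,…,n}. -/
noncomputable def sti (n : ℕ) (u : Finset ℕ → ℝ) (i j : ℕ) : ℝ :=
  (2 / n) * ∑ S ∈ ((Finset.Icc 1 n) \ {i, j}).powerset,
    (1 / ((n - 1).choose S.card) : ℝ) * secondDiff u S i j

lemma take_countP (m : ℕ → Bool) :
    ∀ (l : List ℕ), l.Pairwise (· < ·) → ∀ k,
      (l.take k).countP m
        = l.countP (fun x => m x && decide (l.countP (fun y => decide (y ≤ x)) ≤ k)) := by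
  intro l
  induction l with
  | nil => simp
  | cons a t ih =>
    intro hl k
    have hat : ∀ x ∈ t, a < x := fun x hx => (List.pairwise_cons.mp hl).1 x hx
    have ht : t.Pairwise (· < ·) := (List.pairwise_cons.mp hl).2
    have hra : (a :: t).countP (fun y => decide (y ≤ a)) = 1 := by
      rw [List.countP_cons]
      simp only [decide_eq_true_eq, le_refl, if_pos]
      have : t.countP (fun y => decide (y ≤ a)) = 0 := by
        rw [List.countP_eq_zero]
        intro x hx
        simpa using (hat x hx).not_ge
      omega
    have hrx : ∀ x ∈ t, (a :: t).countP (fun y => decide (y ≤ x))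
        = t.countP (fun y => decide (y ≤ x)) + 1 := by
      intro x hx
      rw [List.countP_cons]
      simp [le_of_lt (hat x hx)]
    cases k with
    | zero =>
      simp only [List.take_zero, List.countP_nil]
      symm
      rw [List.countP_eq_zero]
      intro x hx
      have h1 : 1 ≤ (a :: t).countP (fun y => decide (y ≤ x)) :=
        List.countP_pos_iff.mpr ⟨x, hx, by simp⟩
      simp only [Bool.and_eq_true, decide_eq_true_eq, Nat.le_zero, not_and]
      intro _ h
      omega
    | succ k' =>
      rw [List.take_succ_cons, List.countP_cons, List.countP_cons, ih ht k']
      have hcong : t.countP (fun x => m x && decide (t.countP (fun y => decide (y ≤ x)) ≤ k'))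
          = t.countP (fun x => m x && decide ((a :: t).countP (fun y => decide (y ≤ x)) ≤ k' + 1)) := by
        apply List.countP_congr
        intro x hx
        rw [hrx x hx]
        simp only [Bool.and_eq_true, decide_eq_true_eq]
        constructor <;> rintro ⟨h1, h2⟩ <;> exact ⟨h1, by omega⟩
      rw [hcong, hra]
      simp

/-- card of a filter as a countP over the sorted list. -/
lemma card_filter_eq_countP_sort (S : Finset ℕ) (p : ℕ → Prop) [DecidablePred p] :
    (S.filter p).card = (S.sort (· ≤ ·)).countP (fun x => decide (p x)) := by
  rw [((S.sort_perm_toList (· ≤ ·))).countP_eq]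
  rw [← Multiset.coe_countP, Finset.coe_toList]
  rw [Finset.card_filter]
  simp [Multiset.countP_eq_card_filter, Finset.filter, Finset.card]

/-- rank of x in S: number of elements of S that are ≤ x. -/
def rnk (S : Finset ℕ) (x : ℕ) : ℕ := (S.filter (fun y => y ≤ x)).card

/-- Natural-number count underlying knnVal. -/
def cnt (k : ℕ) (m : ℕ → Bool) (S : Finset ℕ) : ℕ :=
  (S.filter (fun x => m x = true ∧ rnk S x ≤ k)).card

lemma cnt_eq (k : ℕ) (m : ℕ → Bool) (S : Finset ℕ) :
    ((S.sort (· ≤ ·)).take k).countP m = cnt k m S := by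
  rw [take_countP m _ S.sortedLT_sort.pairwise k, cnt, card_filter_eq_countP_sort]
  apply List.countP_congr
  intro x hx
  have h : (S.sort (· ≤ ·)).countP (fun y => decide (y ≤ x))
      = (S.filter (fun y => y ≤ x)).card := (card_filter_eq_countP_sort S _).symm
  simp [rnk, h]
  exact decide_eq_true_iff.symm

lemma knnVal_cnt (k : ℕ) (m : ℕ → Bool) (S : Finset ℕ) :
    knnVal k m S = (cnt k m S : ℝ) / k := by
  rw [knnVal, cnt_eq]

lemma rank_insert (S : Finset ℕ) (a x : ℕ) (ha : a ∉ S) :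
    rnk (insert a S) x = rnk S x + if a ≤ x then 1 else 0 := by
  rw [rnk, rnk, Finset.filter_insert]
  split
  · rw [Finset.card_insert_of_notMem (fun h => ha (Finset.mem_of_mem_filter a h))]
  · simp

lemma cnt_sum (k : ℕ) (m : ℕ → Bool) (S : Finset ℕ) :
    cnt k m S = ∑ x ∈ S, (if m x = true ∧ rnk S x ≤ k then 1 else 0) := by
  rw [cnt, Finset.card_filter]

lemma cnt_marg (k : ℕ) (m : ℕ → Bool) (T : Finset ℕ) (i i' j : ℕ)
    (hij : i < j) (hij' : i' < j) (hiT : i ∉ T) (hi'T : i' ∉ T) (hjT : j ∉ T) :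
    cnt k m (insert j (insert i T)) + cnt k m (insert i' T)
      = cnt k m (insert j (insert i' T)) + cnt k m (insert i T) := by
  have hjiT : j ∉ insert i T := by simp [hjT]; omega
  have hji'T : j ∉ insert i' T := by simp [hjT]; omega
  rw [cnt_sum, cnt_sum, cnt_sum, cnt_sum,
    Finset.sum_insert hjiT, Finset.sum_insert hji'T,
    Finset.sum_insert hiT, Finset.sum_insert hi'T,
    Finset.sum_insert hiT, Finset.sum_insert hi'T]
  have ej : rnk (insert j (insert i T)) j = rnk (insert j (insert i' T)) j := by
    rw [rank_insert _ j j hjiT, rank_insert _ i j hiT,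
      rank_insert _ j j hji'T, rank_insert _ i' j hi'T]
    simp [le_of_lt hij, le_of_lt hij']
  have ei : rnk (insert j (insert i T)) i = rnk (insert i T) i := by
    rw [rank_insert _ j i hjiT, if_neg (by omega)]
    omega
  have ei' : rnk (insert j (insert i' T)) i' = rnk (insert i' T) i' := by
    rw [rank_insert _ j i' hji'T, if_neg (by omega)]
    omega
  have ebody : (∑ x ∈ T, (if m x = true ∧ rnk (insert j (insert i T)) x ≤ k then 1 else 0))
        + ∑ x ∈ T, (if m x = true ∧ rnk (insert i' T) x ≤ k then 1 else 0)
      = (∑ x ∈ T, (if m x = true ∧ rnk (insert j (insert i' T)) x ≤ k then 1 else 0))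
        + ∑ x ∈ T, (if m x = true ∧ rnk (insert i T) x ≤ k then 1 else 0) := by
    rw [← Finset.sum_add_distrib, ← Finset.sum_add_distrib]
    apply Finset.sum_congr rfl
    intro x hx
    have h1 : rnk (insert j (insert i T)) x
        = rnk T x + (if i ≤ x then 1 else 0) + (if j ≤ x then 1 else 0) := by
      rw [rank_insert _ j x hjiT, rank_insert _ i x hiT]
    have h2 : rnk (insert j (insert i' T)) x
        = rnk T x + (if i' ≤ x then 1 else 0) + (if j ≤ x then 1 else 0) := by
      rw [rank_insert _ j x hji'T, rank_insert _ i' x hi'T]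
    have h3 : rnk (insert i T) x = rnk T x + (if i ≤ x then 1 else 0) := rank_insert _ i x hiT
    have h4 : rnk (insert i' T) x = rnk T x + (if i' ≤ x then 1 else 0) := rank_insert _ i' x hi'T
    by_cases hjx : j ≤ x
    · have hix : i ≤ x := by omega
      have hi'x : i' ≤ x := by omega
      rw [h1, h2, h3, h4]
      simp only [if_pos hjx, if_pos hix, if_pos hi'x]
    · rw [h1, h2, h3, h4]
      simp only [if_neg hjx, add_zero]
      omega
  rw [ej, ei, ei']
  omega

lemma knn_marg (k : ℕ) (m : ℕ → Bool) (T : Finset ℕ) (i i' j : ℕ)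
    (hij : i < j) (hij' : i' < j) (hiT : i ∉ T) (hi'T : i' ∉ T) (hjT : j ∉ T) :
    knnVal k m (insert j (insert i T)) - knnVal k m (insert i T)
      = knnVal k m (insert j (insert i' T)) - knnVal k m (insert i' T) := by
  have key := cnt_marg k m T i i' j hij hij' hiT hi'T hjT
  have keyR : (cnt k m (insert j (insert i T)) : ℝ) + cnt k m (insert i' T)
      = (cnt k m (insert j (insert i' T)) : ℝ) + cnt k m (insert i T) := by exact_mod_cast key
  rw [knnVal_cnt, knnVal_cnt, knnVal_cnt, knnVal_cnt, div_sub_div_same, div_sub_div_same]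
  congr 1
  linarith

lemma secondDiff_knn_left (k : ℕ) (m : ℕ → Bool) (S : Finset ℕ) (a b j : ℕ)
    (haj : a < j) (hbj : b < j) (haS : a ∉ S) (hbS : b ∉ S) (hjS : j ∉ S) :
    secondDiff (knnVal k m) S a j = secondDiff (knnVal k m) S b j := by
  have h1 : S ∪ {a, j} = insert j (insert a S) := by ext x; simp; tauto
  have h2 : S ∪ {b, j} = insert j (insert b S) := by ext x; simp; tauto
  have h3 : S ∪ {a} = insert a S := by ext x; simp
  have h4 : S ∪ {b} = insert b S := by ext x; simp
  have hm := knn_marg k m S a b j haj hbj haS hbS hjS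
  rw [secondDiff, secondDiff, h1, h2, h3, h4]
  linarith

lemma secondDiff_knn_swap (k : ℕ) (m : ℕ → Bool) (T : Finset ℕ) (a b j : ℕ)
    (haj : a < j) (hbj : b < j) (haT : a ∉ T) (hbT : b ∉ T) (hjT : j ∉ T) :
    secondDiff (knnVal k m) (insert b T) a j = secondDiff (knnVal k m) (insert a T) b j := by
  have h1 : insert b T ∪ {a, j} = insert a T ∪ {b, j} := by ext x; simp; tauto
  have h2 : insert b T ∪ {a} = insert a T ∪ {b} := by ext x; simp; tauto
  have h3 : insert b T ∪ {j} = insert j (insert b T) := by ext x; simp; tauto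
  have h4 : insert a T ∪ {j} = insert j (insert a T) := by ext x; simp; tauto
  have hm := knn_marg k m T a b j haj hbj haT hbT hjT
  rw [secondDiff, secondDiff, h1, h2, h3, h4]
  linarith

theorem sti_knn_columns_equal (n k : ℕ) (m : ℕ → Bool) (j a b : ℕ)
    (hk : 1 ≤ k) (hkn : k ≤ n) (hjn : j ≤ n)
    (ha : 1 ≤ a) (hb : 1 ≤ b) (haj : a < j) (hbj : b < j) :
    sti n (knnVal k m) a j = sti n (knnVal k m) b j := by
  by_cases hab : a = b
  · rw [hab]
  rw [sti, sti]
  congr 1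
  refine Finset.sum_bij' (fun S _ => if b ∈ S then insert a (S.erase b) else S)
    (fun S _ => if a ∈ S then insert b (S.erase a) else S) ?_ ?_ ?_ ?_ ?_
  · intro S hS
    try dsimp only
    rw [Finset.mem_powerset] at hS ⊢
    intro x hx
    try dsimp only at hx
    by_cases hbS : b ∈ S
    · rw [if_pos hbS] at hx
      rcases Finset.mem_insert.mp hx with rfl | hx'
      · simp only [Finset.mem_sdiff, Finset.mem_Icc, Finset.mem_insert, Finset.mem_singleton]
        omega
      · have hxS : x ∈ S := Finset.mem_of_mem_erase hx'
        have hxb : x ≠ b := Finset.ne_of_mem_erase hx'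
        have := hS hxS
        simp only [Finset.mem_sdiff, Finset.mem_Icc, Finset.mem_insert, Finset.mem_singleton]
          at this ⊢
        tauto
    · rw [if_neg hbS] at hx
      have := hS hx
      have hxb : x ≠ b := fun h => hbS (h ▸ hx)
      simp only [Finset.mem_sdiff, Finset.mem_Icc, Finset.mem_insert, Finset.mem_singleton]
        at this ⊢
      tauto
  · intro S hS
    try dsimp only
    rw [Finset.mem_powerset] at hS ⊢
    intro x hx
    try dsimp only at hx
    by_cases haS : a ∈ S
    · rw [if_pos haS] at hx
      rcases Finset.mem_insert.mp hx with rfl | hx'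
      · simp only [Finset.mem_sdiff, Finset.mem_Icc, Finset.mem_insert, Finset.mem_singleton]
        omega
      · have hxS : x ∈ S := Finset.mem_of_mem_erase hx'
        have hxa : x ≠ a := Finset.ne_of_mem_erase hx'
        have := hS hxS
        simp only [Finset.mem_sdiff, Finset.mem_Icc, Finset.mem_insert, Finset.mem_singleton]
          at this ⊢
        tauto
    · rw [if_neg haS] at hx
      have := hS hx
      have hxa : x ≠ a := fun h => haS (h ▸ hx)
      simp only [Finset.mem_sdiff, Finset.mem_Icc, Finset.mem_insert, Finset.mem_singleton]
        at this ⊢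
      tauto
  · intro S hS
    try dsimp only
    rw [Finset.mem_powerset] at hS
    have haS : a ∉ S := by
      intro h
      have := hS h
      simp at this
    by_cases hbS : b ∈ S
    · rw [if_pos hbS]
      have haE : a ∉ S.erase b := fun h => haS (Finset.mem_of_mem_erase h)
      rw [if_pos (Finset.mem_insert_self a _), Finset.erase_insert haE, Finset.insert_erase hbS]
    · rw [if_neg hbS, if_neg haS]
  · intro S hS
    try dsimp only
    rw [Finset.mem_powerset] at hS
    have hbS : b ∉ S := by
      intro h
      have := hS h
      simp at this
    by_cases haS : a ∈ S
    · rw [if_pos haS]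
      have hbE : b ∉ S.erase a := fun h => hbS (Finset.mem_of_mem_erase h)
      rw [if_pos (Finset.mem_insert_self b _), Finset.erase_insert hbE, Finset.insert_erase haS]
    · rw [if_neg haS, if_neg hbS]
  · intro S hS
    try dsimp only
    rw [Finset.mem_powerset] at hS
    have haS : a ∉ S := by
      intro h
      have := hS h
      simp at this
    have hjS : j ∉ S := by
      intro h
      have := hS h
      simp at this
    by_cases hbS : b ∈ S
    · rw [if_pos hbS]
      have haE : a ∉ S.erase b := fun h => haS (Finset.mem_of_mem_erase h)
      have hbE : b ∉ S.erase b := Finset.notMem_erase b S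
      have hjE : j ∉ S.erase b := fun h => hjS (Finset.mem_of_mem_erase h)
      have hcard : (insert a (S.erase b)).card = S.card := by
        rw [Finset.card_insert_of_notMem haE, Finset.card_erase_of_mem hbS]
        have : 1 ≤ S.card := Finset.card_pos.mpr ⟨b, hbS⟩
        omega
      rw [hcard]
      congr 1
      calc secondDiff (knnVal k m) S a j
          = secondDiff (knnVal k m) (insert b (S.erase b)) a j := by
            rw [Finset.insert_erase hbS]
        _ = secondDiff (knnVal k m) (insert a (S.erase b)) b j :=
            secondDiff_knn_swap k m (S.erase b) a b j haj hbj haE hbE hjE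
    · rw [if_neg hbS]
      congr 1
      exact secondDiff_knn_left k m S a b j haj hbj haS hbS hjS
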